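/- For all natural numbers n, m: B_{s,q}[n+m] = Σ_{r=0}^{n} Σ_{j=0}^{m} S_{s,q}[m,j] · q^{r(j(1−s)+sm)} · binom(n,r)_{q^s} · B_{s,q}[r] · Π_{i=0}^{n−r−1} [j(1−s) + sm + s·i]_q. (Generalized Spivey formula for generalized Bell numbers.) -/

import Mathlib

/-- The `q`-bracket `[t]_q = (q^t - 1)/(q - 1)` (real exponentiation). -/
noncomputable def qBracket (q t : ℝ) : ℝ := (q ^ t - 1) / (q - 1)

open Classical in
/-- The `Q`-binomial coefficient: the sum of `Q^(t₁+⋯+t_{n-k})` over all weakly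
increasing integer tuples `0 ≤ t₁ ≤ ⋯ ≤ t_{n-k} ≤ k` when `k ≤ n`, and `0` when `k > n`. -/
noncomputable def qBinom (Q : ℝ) (n k : ℕ) : ℝ :=
  if k ≤ n then
    ∑ f ∈ Finset.univ.filter (fun f : Fin (n - k) → Fin (k + 1) => Monotone f),
      Q ^ (∑ i, (f i : ℕ))
  else 0

/-- The generalized `q`-Stirling numbers `S_{s,q}[n,k]` of Goldman–Haglund type. -/
noncomputable def genStirling (s q : ℝ) : ℕ → ℕ → ℝ
  | 0, 0 => 1
  | 0, _ + 1 => 0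
  | _ + 1, 0 => 0
  | n + 1, k + 1 =>
    if k + 1 ≤ n + 1 then
      q ^ (s * (n : ℝ) - (s - 1) * (k : ℝ)) * genStirling s q n k
        + qBracket q (s * (n : ℝ) - (s - 1) * ((k : ℝ) + 1)) * genStirling s q n (k + 1)
    else 0

/-- The generalized Bell number `B_{s,q}[n]`. -/
noncomputable def genBell (s q : ℝ) (n : ℕ) : ℝ :=
  ∑ k ∈ Finset.range (n + 1), genStirling s q n k

noncomputable def Vfun (s q a : ℝ) : ℕ → ℕ → ℝ
  | 0, 0 => 1
  | 0, _ + 1 => 0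
  | n + 1, 0 => qBracket q (a + s * (n : ℝ)) * Vfun s q a n 0
  | n + 1, l + 1 =>
      q ^ (a + s * (n : ℝ) - (s - 1) * (l : ℝ)) * Vfun s q a n l
        + qBracket q (a + s * (n : ℝ) - (s - 1) * ((l : ℝ) + 1)) * Vfun s q a n (l + 1)

lemma qBracket_add {q : ℝ} (hq : 0 < q) (x y : ℝ) :
    qBracket q (x + y) = qBracket q x + q ^ x * qBracket q y := by
  simp only [qBracket, Real.rpow_add hq]
  rw [mul_div_assoc', ← add_div]
  congr 1
  ring

lemma cons_zero_monotone {d e : ℕ} {g : Fin d → Fin (e+2)} (hg : Monotone g) :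
    Monotone (Fin.cons 0 g) := by
  intro a b hab
  induction a using Fin.cases with
  | zero => simp only [Fin.cons_zero]; exact Fin.zero_le _
  | succ i =>
    induction b using Fin.cases with
    | zero => exact absurd (Fin.le_zero_iff.mp hab) (Fin.succ_ne_zero i)
    | succ j =>
      simp only [Fin.cons_succ]
      exact hg (Fin.succ_le_succ_iff.mp hab)

open Classical in
lemma key_split (Q : ℝ) (d e : ℕ) :
    ∑ f ∈ Finset.univ.filter (fun f : Fin (d+1) → Fin (e+2) => Monotone f),
        Q ^ (∑ i, (f i : ℕ))
    = Q^(d+1) * ∑ f ∈ Finset.univ.filter (fun f : Fin (d+1) → Fin (e+1) => Monotone f),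
        Q ^ (∑ i, (f i : ℕ))
      + ∑ f ∈ Finset.univ.filter (fun f : Fin d → Fin (e+2) => Monotone f),
        Q ^ (∑ i, (f i : ℕ)) := by
  classical
  rw [← Finset.sum_filter_add_sum_filter_not
      (Finset.univ.filter (fun f : Fin (d+1) → Fin (e+2) => Monotone f))
      (fun f => f 0 ≠ 0)]
  congr 1
  · -- f 0 ≠ 0 part: bijection with monotone g : Fin (d+1) → Fin (e+1), f = Fin.succ ∘ g
    rw [Finset.mul_sum]
    refine Finset.sum_nbij' (i := fun f => fun i => (⟨(f i : ℕ) - 1, by omega⟩ : Fin (e+1)))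
      (j := fun g => fun i => Fin.succ (g i)) ?_ ?_ ?_ ?_ ?_
    · intro f hf
      simp only [Finset.mem_filter, Finset.mem_univ, true_and] at hf ⊢
      intro a b hab
      exact Fin.mk_le_mk.mpr (Nat.sub_le_sub_right (hf.1 hab) 1)
    · intro g hg
      simp only [Finset.mem_filter, Finset.mem_univ, true_and] at hg ⊢
      constructor
      · intro a b hab; exact Fin.succ_le_succ_iff.mpr (hg hab)
      · exact Fin.succ_ne_zero _
    · intro f hf
      simp only [Finset.mem_filter, Finset.mem_univ, true_and] at hf
      obtain ⟨hmono, hne⟩ := hf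
      have h0 : 1 ≤ (f 0 : ℕ) := by
        rcases Nat.eq_zero_or_pos (f 0 : ℕ) with h | h
        · exact absurd (Fin.ext h) hne
        · exact h
      funext i
      have : 1 ≤ (f i : ℕ) := le_trans h0 (hmono (Fin.zero_le i))
      apply Fin.ext
      simp only [Fin.val_succ]
      omega
    · intro g hg
      funext i
      apply Fin.ext
      simp [Fin.val_succ]
    · intro f hf
      simp only [Finset.mem_filter, Finset.mem_univ, true_and] at hf
      obtain ⟨hmono, hne⟩ := hf
      have h0 : 1 ≤ (f 0 : ℕ) := by
        rcases Nat.eq_zero_or_pos (f 0 : ℕ) with h | h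
        · exact absurd (Fin.ext h) hne
        · exact h
      have hsum : (∑ i, (f i : ℕ)) = (d+1) + ∑ i : Fin (d+1), ((f i : ℕ) - 1) := by
        have : ∀ i : Fin (d+1), (f i : ℕ) = ((f i : ℕ) - 1) + 1 := by
          intro i
          have := le_trans h0 (hmono (Fin.zero_le i))
          omega
        rw [Finset.sum_congr rfl (fun i _ => this i), Finset.sum_add_distrib]
        simp [add_comm]
      rw [hsum, pow_add]
  · -- f 0 = 0 part: bijection with monotone g : Fin d → Fin (e+2), f = Fin.cons 0 g
    refine Finset.sum_nbij' (i := fun f => Fin.tail f) (j := fun g => Fin.cons 0 g) ?_ ?_ ?_ ?_ ?_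
    · intro f hf
      simp only [Finset.mem_filter, Finset.mem_univ, true_and, not_not] at hf ⊢
      intro a b hab
      exact hf.1 (Fin.succ_le_succ_iff.mpr hab)
    · intro g hg
      simp only [Finset.mem_filter, Finset.mem_univ, true_and, not_not] at hg ⊢
      exact ⟨cons_zero_monotone hg, Fin.cons_zero _ _⟩
    · intro f hf
      simp only [Finset.mem_filter, Finset.mem_univ, true_and, not_not] at hf
      rw [← hf.2]
      exact Fin.cons_self_tail f
    · intro g hg
      simp [Fin.tail_cons]
    · intro f hf
      simp only [Finset.mem_filter, Finset.mem_univ, true_and, not_not] at hf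
      congr 1
      rw [Fin.sum_univ_succ, hf.2]
      simp [Fin.tail]

lemma qBinom_of_lt {Q : ℝ} {n k : ℕ} (h : n < k) : qBinom Q n k = 0 := by
  simp [qBinom, Nat.not_le.mpr h]

lemma qBinom_zero_right (Q : ℝ) (n : ℕ) : qBinom Q n 0 = 1 := by
  rw [qBinom, if_pos (Nat.zero_le n)]
  have h1 : (Finset.univ.filter (fun f : Fin (n - 0) → Fin (0 + 1) => Monotone f))
      = {fun _ => 0} := by
    ext f
    simp only [Finset.mem_filter, Finset.mem_univ, true_and, Finset.mem_singleton]
    constructor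
    · intro _; funext i; exact Fin.ext (Nat.lt_one_iff.mp (f i).isLt)
    · intro h; subst h; exact monotone_const
  rw [h1, Finset.sum_singleton]
  simp

lemma qBinom_self (Q : ℝ) (n : ℕ) : qBinom Q n n = 1 := by
  rw [qBinom, if_pos le_rfl]
  have h1 : (Finset.univ.filter (fun f : Fin (n - n) → Fin (n + 1) => Monotone f))
      = {fun i => absurd i.2 (by omega)} := by
    ext f
    simp only [Finset.mem_filter, Finset.mem_univ, true_and, Finset.mem_singleton]
    constructor
    · intro _; funext i; exact absurd i.2 (by omega)
    · intro h; subst h; intro a; exact absurd a.2 (by omega)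
  rw [h1, Finset.sum_singleton]
  have : (∑ i : Fin (n - n), ((absurd i.2 (by omega : ¬ i.1 < n - n) : Fin (n+1)) : ℕ)) = 0 := by
    apply Finset.sum_eq_zero; intro i _; exact absurd i.2 (by omega)
  rw [this, pow_zero]

open Classical in
lemma qBinom_eq (Q : ℝ) {n k a : ℕ} (h : k ≤ n) (ha : n - k = a) :
    qBinom Q n k
    = ∑ f ∈ Finset.univ.filter (fun f : Fin a → Fin (k + 1) => Monotone f),
        Q ^ (∑ i, (f i : ℕ)) := by
  subst ha
  rw [qBinom, if_pos h]

lemma qBinom_pascal (Q : ℝ) {n r : ℕ} (h : r ≤ n) :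
    qBinom Q (n+1) (r+1) = Q ^ (n - r) * qBinom Q n r + qBinom Q n (r+1) := by
  rcases eq_or_lt_of_le h with rfl | hlt
  · rw [qBinom_self, qBinom_self, qBinom_of_lt (Nat.lt_succ_self r)]
    simp
  · obtain ⟨d, hd⟩ : ∃ d, n - r = d + 1 := ⟨n - r - 1, by omega⟩
    have h1 : n + 1 - (r+1) = d + 1 := by omega
    have h3 : n - (r+1) = d := by omega
    rw [qBinom_eq Q (by omega) h1, qBinom_eq Q h hd, qBinom_eq Q (by omega) h3, hd]
    exact key_split Q d r

lemma genStirling_of_lt {s q : ℝ} : ∀ {n k : ℕ}, n < k → genStirling s q n k = 0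
  | 0, k + 1, _ => rfl
  | n + 1, k + 1, h => by
    rw [genStirling, if_neg (by omega)]

lemma genStirling_succ_succ (s q : ℝ) (n k : ℕ) :
    genStirling s q (n + 1) (k + 1)
    = q ^ (s * (n : ℝ) - (s - 1) * (k : ℝ)) * genStirling s q n k
        + qBracket q (s * (n : ℝ) - (s - 1) * ((k : ℝ) + 1)) * genStirling s q n (k + 1) := by
  by_cases h : k + 1 ≤ n + 1
  · rw [genStirling, if_pos h]
  · rw [genStirling, if_neg h, genStirling_of_lt (by omega), genStirling_of_lt (by omega)]
    ring

lemma Vfun_succ_succ (s q a : ℝ) (n l : ℕ) :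
    Vfun s q a (n + 1) (l + 1)
    = q ^ (a + s * (n : ℝ) - (s - 1) * (l : ℝ)) * Vfun s q a n l
        + qBracket q (a + s * (n : ℝ) - (s - 1) * ((l : ℝ) + 1)) * Vfun s q a n (l + 1) := rfl

lemma Vfun_of_lt {s q a : ℝ} : ∀ {n l : ℕ}, n < l → Vfun s q a n l = 0
  | 0, l + 1, _ => rfl
  | n + 1, l + 1, h => by
    rw [Vfun_succ_succ, Vfun_of_lt (by omega), Vfun_of_lt (by omega)]
    ring

lemma Vfun_zero_right (s q a : ℝ) : ∀ n : ℕ,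
    Vfun s q a n 0 = ∏ i ∈ Finset.range n, qBracket q (a + s * (i : ℝ))
  | 0 => rfl
  | n + 1 => by
    rw [Finset.prod_range_succ, ← Vfun_zero_right s q a n, Vfun, mul_comm]

lemma Vfun_succ_zero (s q a : ℝ) (n : ℕ) :
    Vfun s q a (n + 1) 0 = qBracket q (a + s * (n : ℝ)) * Vfun s q a n 0 := rfl

lemma qBracket_zero (q : ℝ) : qBracket q 0 = 0 := by simp [qBracket]

lemma stirling_vanish_sum (s q : ℝ) (m n k : ℕ) (h : n + m < k) :
    ∑ j ∈ Finset.range (k + 1), genStirling s q m j *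
      Vfun s q ((j : ℝ) * (1 - s) + s * (m : ℝ)) n (k - j) = 0 := by
  apply Finset.sum_eq_zero
  intro j hj
  by_cases hjm : j ≤ m
  · rw [Vfun_of_lt (by omega), mul_zero]
  · rw [genStirling_of_lt (by omega), zero_mul]

lemma stirling_decomp (s q : ℝ) (m n : ℕ) : ∀ (k : ℕ),
    genStirling s q (n + m) k
    = ∑ j ∈ Finset.range (k + 1), genStirling s q m j *
        Vfun s q ((j : ℝ) * (1 - s) + s * (m : ℝ)) n (k - j) := by
  induction n with
  | zero =>
    intro k
    simp only [Nat.zero_add]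
    rw [Finset.sum_eq_single_of_mem k (Finset.self_mem_range_succ k)]
    · rw [Nat.sub_self]
      simp [Vfun]
    · intro j hj hne
      have hjk : j < k := by have := Finset.mem_range.mp hj; omega
      rw [show k - j = (k - j - 1) + 1 from by omega]
      simp [Vfun]
  | succ n IH =>
    intro k
    cases k with
    | zero =>
      rw [show n + 1 + m = (n + m) + 1 from by omega]
      rw [show genStirling s q ((n + m) + 1) 0 = 0 from rfl]
      rw [Finset.sum_range_one]
      cases m with
      | zero =>
        rw [show genStirling s q 0 0 = 1 from rfl, one_mul, Vfun_zero_right, eq_comm]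
        apply Finset.prod_eq_zero (Finset.mem_range.mpr (Nat.succ_pos n))
        rw [show ((0:ℕ):ℝ) * (1 - s) + s * ((0:ℕ):ℝ) + s * ((0:ℕ):ℝ) = 0 from by push_cast; ring]
        exact qBracket_zero q
      | succ m' =>
        rw [show genStirling s q (m' + 1) 0 = 0 from rfl, zero_mul]
    | succ k' =>
      by_cases hk : k' + 1 ≤ n + 1 + m
      · have e1 : n + 1 + m = (n + m) + 1 := by omega
        rw [e1, genStirling_succ_succ, IH k', IH (k' + 1)]
        have hterm : ∀ j ∈ Finset.range (k' + 1),
            genStirling s q m j * Vfun s q ((j : ℝ) * (1 - s) + s * (m : ℝ)) (n + 1) (k' + 1 - j)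
            = q ^ (s * ((n + m : ℕ) : ℝ) - (s - 1) * (k' : ℝ)) *
                (genStirling s q m j * Vfun s q ((j : ℝ) * (1 - s) + s * (m : ℝ)) n (k' - j))
              + qBracket q (s * ((n + m : ℕ) : ℝ) - (s - 1) * ((k' : ℝ) + 1)) *
                (genStirling s q m j * Vfun s q ((j : ℝ) * (1 - s) + s * (m : ℝ)) n (k' + 1 - j)) := by
          intro j hj
          have hj' : j ≤ k' := by have := Finset.mem_range.mp hj; omega
          have e2 : k' + 1 - j = (k' - j) + 1 := by omega
          rw [e2, Vfun_succ_succ]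
          have c1 : (j : ℝ) * (1 - s) + s * (m : ℝ) + s * (n : ℝ) - (s - 1) * ((k' - j : ℕ) : ℝ)
              = s * ((n + m : ℕ) : ℝ) - (s - 1) * (k' : ℝ) := by
            push_cast [Nat.cast_sub hj']; ring
          have c2 : (j : ℝ) * (1 - s) + s * (m : ℝ) + s * (n : ℝ) - (s - 1) * (((k' - j : ℕ) : ℝ) + 1)
              = s * ((n + m : ℕ) : ℝ) - (s - 1) * ((k' : ℝ) + 1) := by
            push_cast [Nat.cast_sub hj']; ring
          rw [c1, c2]
          ring
        conv_rhs => rw [Finset.sum_range_succ, Finset.sum_congr rfl hterm, Nat.sub_self]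
        rw [Finset.sum_add_distrib, ← Finset.mul_sum, ← Finset.mul_sum]
        rw [Vfun_succ_zero]
        have c3 : ((k' + 1 : ℕ) : ℝ) * (1 - s) + s * (m : ℝ) + s * (n : ℝ)
            = s * ((n + m : ℕ) : ℝ) - (s - 1) * ((k' : ℝ) + 1) := by
          push_cast; ring
        rw [c3]
        rw [Finset.sum_range_succ
          (fun j => genStirling s q m j * Vfun s q ((j : ℝ) * (1 - s) + s * (m : ℝ)) n (k' + 1 - j))]
        rw [Nat.sub_self]
        ring
      · rw [genStirling_of_lt (by omega), eq_comm]
        apply stirling_vanish_sum s q m (n + 1) (k' + 1) (by omega)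

lemma Vfun_eq_sum (s q : ℝ) (hq : 0 < q) (a : ℝ) (n : ℕ) : ∀ l : ℕ,
    Vfun s q a n l = ∑ r ∈ Finset.range (n + 1),
      q ^ ((r : ℝ) * a) * qBinom (q ^ s) n r * genStirling s q r l *
        ∏ i ∈ Finset.range (n - r), qBracket q (a + s * (i : ℝ)) := by
  have hQpow : ∀ m : ℕ, ((q ^ s : ℝ)) ^ m = q ^ (s * (m : ℝ)) := by
    intro m
    rw [← Real.rpow_natCast (q ^ s) m, ← Real.rpow_mul hq.le]
  have hpow : ∀ x y : ℝ, q ^ x * q ^ y = q ^ (x + y) :=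
    fun x y => (Real.rpow_add hq x y).symm
  induction n with
  | zero =>
    intro l
    rw [Finset.sum_range_one, show ((0:ℕ):ℝ) * a = 0 from by norm_num, Real.rpow_zero,
      qBinom_zero_right]
    cases l <;> simp [Vfun, genStirling]
  | succ n IH =>
    intro l
    cases l with
    | zero =>
      rw [Finset.sum_eq_single_of_mem 0 (Finset.mem_range.mpr (Nat.succ_pos (n+1)))
        (fun b _ hbne => by
          obtain ⟨b', rfl⟩ : ∃ b', b = b' + 1 := ⟨b - 1, by omega⟩
          rw [show genStirling s q (b' + 1) 0 = 0 from rfl]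
          ring)]
      rw [Vfun_zero_right, qBinom_zero_right, show ((0:ℕ):ℝ) * a = 0 from by norm_num,
        Real.rpow_zero, show genStirling s q 0 0 = 1 from rfl, Nat.sub_zero]
      ring
    | succ l' =>
      rw [Vfun_succ_succ, IH l', IH (l' + 1), Finset.mul_sum, Finset.mul_sum,
        ← Finset.sum_add_distrib]
      rw [eq_comm, Finset.sum_range_succ']
      simp only [show genStirling s q 0 (l' + 1) = 0 from rfl, mul_zero, zero_mul, add_zero]
      have h3 : ∀ r ∈ Finset.range (n + 1),
          q ^ (((r + 1 : ℕ) : ℝ) * a) * qBinom (q ^ s) (n + 1) (r + 1) *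
              genStirling s q (r + 1) (l' + 1) *
              ∏ i ∈ Finset.range (n + 1 - (r + 1)), qBracket q (a + s * (i : ℝ))
          = (q ^ (((r + 1 : ℕ) : ℝ) * a) * (q ^ s) ^ (n - r) * qBinom (q ^ s) n r *
              genStirling s q (r + 1) (l' + 1) *
              ∏ i ∈ Finset.range (n - r), qBracket q (a + s * (i : ℝ)))
            + (q ^ (((r + 1 : ℕ) : ℝ) * a) * qBinom (q ^ s) n (r + 1) *
              genStirling s q (r + 1) (l' + 1) *
              ∏ i ∈ Finset.range (n + 1 - (r + 1)), qBracket q (a + s * (i : ℝ))) := by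
        intro r hr
        have hr' : r ≤ n := by have := Finset.mem_range.mp hr; omega
        rw [qBinom_pascal (q ^ s) hr', show n + 1 - (r + 1) = n - r from by omega]
        ring
      rw [Finset.sum_congr rfl h3, Finset.sum_add_distrib]
      have h4 : (∑ r ∈ Finset.range (n + 1),
            q ^ (((r + 1 : ℕ) : ℝ) * a) * qBinom (q ^ s) n (r + 1) *
              genStirling s q (r + 1) (l' + 1) *
              ∏ i ∈ Finset.range (n + 1 - (r + 1)), qBracket q (a + s * (i : ℝ)))
          = ∑ r ∈ Finset.range (n + 1),
            q ^ ((r : ℝ) * a) * qBinom (q ^ s) n r * genStirling s q r (l' + 1) *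
              ∏ i ∈ Finset.range (n + 1 - r), qBracket q (a + s * (i : ℝ)) := by
        have e1 := Finset.sum_range_succ' (fun r =>
          q ^ ((r : ℝ) * a) * qBinom (q ^ s) n r * genStirling s q r (l' + 1) *
            ∏ i ∈ Finset.range (n + 1 - r), qBracket q (a + s * (i : ℝ))) (n + 1)
        have e2 := Finset.sum_range_succ (fun r =>
          q ^ ((r : ℝ) * a) * qBinom (q ^ s) n r * genStirling s q r (l' + 1) *
            ∏ i ∈ Finset.range (n + 1 - r), qBracket q (a + s * (i : ℝ))) (n + 1)
        simp only [show genStirling s q 0 (l' + 1) = 0 from rfl,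
          qBinom_of_lt (Nat.lt_succ_self n), mul_zero, zero_mul, add_zero] at e1 e2
        rw [e1] at e2
        exact e2
      rw [h4, ← Finset.sum_add_distrib]
      apply Finset.sum_congr rfl
      intro r hr
      have hr' : r ≤ n := by have := Finset.mem_range.mp hr; omega
      have hcast : ((n - r : ℕ) : ℝ) = (n : ℝ) - (r : ℝ) := by
        push_cast [Nat.cast_sub hr']; ring
      rw [show n + 1 - r = (n - r) + 1 from by omega, Finset.prod_range_succ,
        genStirling_succ_succ s q r l', hQpow (n - r)]
      have i1 : q ^ (((r + 1 : ℕ) : ℝ) * a) * q ^ (s * ((n - r : ℕ) : ℝ)) *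
          q ^ (s * (r : ℝ) - (s - 1) * (l' : ℝ))
          = q ^ (a + s * (n : ℝ) - (s - 1) * (l' : ℝ)) * q ^ ((r : ℝ) * a) := by
        rw [hpow, hpow, hpow]
        congr 1
        rw [hcast]
        push_cast
        ring
      have i3 : q ^ (((r + 1 : ℕ) : ℝ) * a) * q ^ (s * ((n - r : ℕ) : ℝ))
          = q ^ ((r : ℝ) * a) * q ^ (a + s * ((n - r : ℕ) : ℝ)) := by
        rw [hpow, hpow]
        congr 1
        push_cast
        ring
      have i2 : qBracket q (a + s * (n : ℝ) - (s - 1) * ((l' : ℝ) + 1))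
          = qBracket q (a + s * ((n - r : ℕ) : ℝ))
            + q ^ (a + s * ((n - r : ℕ) : ℝ)) *
              qBracket q (s * (r : ℝ) - (s - 1) * ((l' : ℝ) + 1)) := by
        rw [← qBracket_add hq]
        congr 1
        rw [hcast]
        ring
      rw [i2]
      linear_combination
        (qBinom (q ^ s) n r * genStirling s q r l' *
          ∏ i ∈ Finset.range (n - r), qBracket q (a + s * (i : ℝ))) * i1
        + (qBracket q (s * (r : ℝ) - (s - 1) * ((l' : ℝ) + 1)) * qBinom (q ^ s) n r *
            genStirling s q r (l' + 1) *
            ∏ i ∈ Finset.range (n - r), qBracket q (a + s * (i : ℝ))) * i3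

lemma sum_triangle (g : ℕ → ℕ → ℝ) : ∀ N : ℕ,
    ∑ k ∈ Finset.range N, ∑ j ∈ Finset.range (k + 1), g j (k - j)
    = ∑ j ∈ Finset.range N, ∑ l ∈ Finset.range (N - j), g j l := by
  intro N
  induction N with
  | zero => simp
  | succ N IH =>
    rw [Finset.sum_range_succ, IH]
    have h : ∀ j ∈ Finset.range (N + 1),
        ∑ l ∈ Finset.range (N + 1 - j), g j l
        = ∑ l ∈ Finset.range (N - j), g j l + g j (N - j) := by
      intro j hj
      rw [show N + 1 - j = (N - j) + 1 from by
        have := Finset.mem_range.mp hj; omega]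
      exact Finset.sum_range_succ _ _
    rw [Finset.sum_congr rfl h, Finset.sum_add_distrib,
      Finset.sum_range_succ (fun j => ∑ l ∈ Finset.range (N - j), g j l) N]
    simp [Nat.sub_self]

lemma genBell_trunc (s q : ℝ) {r L : ℕ} (h : r < L) :
    ∑ l ∈ Finset.range L, genStirling s q r l = genBell s q r := by
  rw [genBell, eq_comm]
  apply Finset.sum_subset (Finset.range_subset_range.mpr h)
  intro x _ hx
  exact genStirling_of_lt (by have := Finset.mem_range.not.mp hx; omega)

/-- Generalized Spivey formula for generalized Bell numbers. -/
theorem spivey_bell (q s : ℝ) (hq : 0 < q) (hq1 : q ≠ 1) (n m : ℕ) :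
    genBell s q (n + m)
    = ∑ r ∈ Finset.range (n + 1), ∑ j ∈ Finset.range (m + 1),
        genStirling s q m j * q ^ ((r : ℝ) * ((j : ℝ) * (1 - s) + s * (m : ℝ))) *
          qBinom (q ^ s) n r * genBell s q r *
          ∏ i ∈ Finset.range (n - r),
            qBracket q ((j : ℝ) * (1 - s) + s * (m : ℝ) + s * (i : ℝ)) := by
  have key : ∀ j : ℕ,
      ∑ l ∈ Finset.range (n + 1), Vfun s q ((j : ℝ) * (1 - s) + s * (m : ℝ)) n l
      = ∑ r ∈ Finset.range (n + 1),
          q ^ ((r : ℝ) * ((j : ℝ) * (1 - s) + s * (m : ℝ))) * qBinom (q ^ s) n r *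
            genBell s q r *
            ∏ i ∈ Finset.range (n - r),
              qBracket q ((j : ℝ) * (1 - s) + s * (m : ℝ) + s * (i : ℝ)) := by
    intro j
    calc ∑ l ∈ Finset.range (n + 1), Vfun s q ((j : ℝ) * (1 - s) + s * (m : ℝ)) n l
        = ∑ l ∈ Finset.range (n + 1), ∑ r ∈ Finset.range (n + 1),
            q ^ ((r : ℝ) * ((j : ℝ) * (1 - s) + s * (m : ℝ))) * qBinom (q ^ s) n r *
              genStirling s q r l *
              ∏ i ∈ Finset.range (n - r),
                qBracket q ((j : ℝ) * (1 - s) + s * (m : ℝ) + s * (i : ℝ)) :=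
          Finset.sum_congr rfl (fun l _ => Vfun_eq_sum s q hq _ n l)
      _ = ∑ r ∈ Finset.range (n + 1), ∑ l ∈ Finset.range (n + 1),
            q ^ ((r : ℝ) * ((j : ℝ) * (1 - s) + s * (m : ℝ))) * qBinom (q ^ s) n r *
              genStirling s q r l *
              ∏ i ∈ Finset.range (n - r),
                qBracket q ((j : ℝ) * (1 - s) + s * (m : ℝ) + s * (i : ℝ)) :=
          Finset.sum_comm
      _ = _ := by
          apply Finset.sum_congr rfl
          intro r hr
          rw [← Finset.sum_mul, ← Finset.mul_sum,
            genBell_trunc s q (Finset.mem_range.mp hr)]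
  calc genBell s q (n + m)
      = ∑ k ∈ Finset.range (n + m + 1), genStirling s q (n + m) k := rfl
    _ = ∑ k ∈ Finset.range (n + m + 1), ∑ j ∈ Finset.range (k + 1),
          genStirling s q m j * Vfun s q ((j : ℝ) * (1 - s) + s * (m : ℝ)) n (k - j) :=
        Finset.sum_congr rfl (fun k _ => stirling_decomp s q m n k)
    _ = ∑ j ∈ Finset.range (n + m + 1), ∑ l ∈ Finset.range (n + m + 1 - j),
          genStirling s q m j * Vfun s q ((j : ℝ) * (1 - s) + s * (m : ℝ)) n l :=
        sum_triangle (fun j l => genStirling s q m j *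
          Vfun s q ((j : ℝ) * (1 - s) + s * (m : ℝ)) n l) (n + m + 1)
    _ = ∑ j ∈ Finset.range (m + 1), ∑ l ∈ Finset.range (n + m + 1 - j),
          genStirling s q m j * Vfun s q ((j : ℝ) * (1 - s) + s * (m : ℝ)) n l := by
        rw [eq_comm]
        apply Finset.sum_subset (Finset.range_subset_range.mpr (by omega : m + 1 ≤ n + m + 1))
        intro j _ hj
        apply Finset.sum_eq_zero
        intro l _
        rw [genStirling_of_lt (by have := Finset.mem_range.not.mp hj; omega), zero_mul]
    _ = ∑ j ∈ Finset.range (m + 1),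
          genStirling s q m j *
            ∑ l ∈ Finset.range (n + 1), Vfun s q ((j : ℝ) * (1 - s) + s * (m : ℝ)) n l := by
        apply Finset.sum_congr rfl
        intro j hj
        rw [← Finset.mul_sum]
        congr 1
        rw [eq_comm]
        apply Finset.sum_subset
          (Finset.range_subset_range.mpr (by have := Finset.mem_range.mp hj; omega : n + 1 ≤ n + m + 1 - j))
        intro l _ hl
        exact Vfun_of_lt (by have := Finset.mem_range.not.mp hl; omega)
    _ = ∑ j ∈ Finset.range (m + 1), ∑ r ∈ Finset.range (n + 1),
          genStirling s q m j *
            (q ^ ((r : ℝ) * ((j : ℝ) * (1 - s) + s * (m : ℝ))) * qBinom (q ^ s) n r *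
              genBell s q r *
              ∏ i ∈ Finset.range (n - r),
                qBracket q ((j : ℝ) * (1 - s) + s * (m : ℝ) + s * (i : ℝ))) := by
        apply Finset.sum_congr rfl
        intro j _
        rw [key j, Finset.mul_sum]
    _ = ∑ r ∈ Finset.range (n + 1), ∑ j ∈ Finset.range (m + 1),
          genStirling s q m j *
            (q ^ ((r : ℝ) * ((j : ℝ) * (1 - s) + s * (m : ℝ))) * qBinom (q ^ s) n r *
              genBell s q r *
              ∏ i ∈ Finset.range (n - r),
                qBracket q ((j : ℝ) * (1 - s) + s * (m : ℝ) + s * (i : ℝ))) :=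
        Finset.sum_comm
    _ = _ := by
        apply Finset.sum_congr rfl
        intro r _
        apply Finset.sum_congr rfl
        intro j _
        ring
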